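/- Let m ≥ 1 be an integer and let ρ ∈ (0,1). Define the flow at time t by φ_m(t) = 1 − ρ − Σ_{j=1}^{t+1} (j/(t+1)) · C((m+1)(t+1), t+1−j) · ρ^{t+1−j} (1−ρ)^{m(t+1)+j}, where C denotes the binomial coefficient. Then lim_{t→∞} φ_m(t) = m·ρ if ρ < 1/(m+1) and lim_{t→∞} φ_m(t) = 1 − ρ otherwise; equivalently, lim_{t→∞} φ_m(t) = min(m·ρ, 1 − ρ). (This is the steady-state fundamental diagram of the deterministic Fukui–Ishibashi model.) -/

import Mathlib

open Filter Finset

private lemma bin_sum (N : ℕ) (p q : ℝ) (h : p + q = 1) :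
    ∑ k ∈ range (N+1), (N.choose k : ℝ) * p^k * q^(N-k) = 1 := by
  have h1 : ∑ k ∈ range (N+1), (N.choose k : ℝ) * p^k * q^(N-k) = (p+q)^N := by
    rw [add_pow]; exact sum_congr rfl (fun k _ => by ring)
  rw [h1, h, one_pow]

private lemma bin_mean (N : ℕ) (p q : ℝ) (h : p + q = 1) :
    ∑ k ∈ range (N+1), (k:ℝ) * ((N.choose k : ℝ) * p^k * q^(N-k)) = N * p := by
  cases N with
  | zero => simp
  | succ n =>
    rw [Finset.sum_range_succ']
    simp only [Nat.cast_zero, zero_mul, add_zero]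
    have key : ∀ i ∈ range (n+1), ((i+1 : ℕ):ℝ) * (((n+1).choose (i+1) : ℝ) * p^(i+1) * q^(n+1-(i+1)))
        = ((n:ℝ)+1) * p * ((n.choose i : ℝ) * p^i * q^(n-i)) := by
      intro i hi
      have h1 : (n+1) * n.choose i = (n+1).choose (i+1) * (i+1) := Nat.add_one_mul_choose_eq n i
      have h1' : ((n:ℝ)+1) * (n.choose i : ℝ) = ((n+1).choose (i+1) : ℝ) * ((i:ℝ)+1) := by
        exact_mod_cast congrArg (Nat.cast : ℕ → ℝ) h1
      have h2 : n + 1 - (i+1) = n - i := by omega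
      rw [h2]
      push_cast
      linear_combination (-(p^(i+1) * q^(n-i))) * h1'
    rw [Finset.sum_congr rfl key, ← Finset.mul_sum, bin_sum n p q h]
    push_cast; ring

private lemma bin_fac2 (N : ℕ) (p q : ℝ) (h : p + q = 1) :
    ∑ k ∈ range (N+1), (k:ℝ) * ((k:ℝ)-1) * ((N.choose k : ℝ) * p^k * q^(N-k)) = N * ((N:ℝ)-1) * p^2 := by
  match N with
  | 0 => simp
  | 1 => simp [Finset.sum_range_succ]
  | (n+2) =>
    rw [Finset.sum_range_succ', Finset.sum_range_succ']
    simp only [Nat.cast_zero, Nat.cast_one, zero_mul, mul_zero, add_zero]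
    norm_num
    have key : ∀ i ∈ range (n+1), ((i:ℝ)+1+1) * (((i:ℝ))+1) * (((n+2).choose (i+1+1) : ℝ) * p^(i+1+1) * q^(n+2-(i+1+1)))
        = ((n:ℝ)+2) * ((n:ℝ)+1) * p^2 * ((n.choose i : ℝ) * p^i * q^(n-i)) := by
      intro i hi
      have h1 : (n+2) * (n+1).choose (i+1) = (n+2).choose (i+2) * (i+2) := Nat.add_one_mul_choose_eq (n+1) (i+1)
      have h2 : (n+1) * n.choose i = (n+1).choose (i+1) * (i+1) := Nat.add_one_mul_choose_eq n i
      have h1' : ((n:ℝ)+2) * ((n+1).choose (i+1) : ℝ) = ((n+2).choose (i+2) : ℝ) * ((i:ℝ)+2) := by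
        exact_mod_cast congrArg (Nat.cast : ℕ → ℝ) h1
      have h2' : ((n:ℝ)+1) * (n.choose i : ℝ) = ((n+1).choose (i+1) : ℝ) * ((i:ℝ)+1) := by
        exact_mod_cast congrArg (Nat.cast : ℕ → ℝ) h2
      have h3 : n + 2 - (i+2) = n - i := by omega
      rw [show i+1+1 = i+2 from rfl, h3]
      linear_combination (-(p^(i+2)*q^(n-i))*((i:ℝ)+1))*h1' + (-(p^(i+2)*q^(n-i))*((n:ℝ)+2))*h2'
    rw [Finset.sum_congr rfl key, ← Finset.mul_sum, bin_sum n p q h]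
    push_cast; ring

private lemma bin_var (N : ℕ) (p q : ℝ) (h : p + q = 1) :
    ∑ k ∈ range (N+1), ((k:ℝ) - N*p)^2 * ((N.choose k : ℝ) * p^k * q^(N-k)) = N * p * q := by
  have e : ∀ k ∈ range (N+1), ((k:ℝ) - N*p)^2 * ((N.choose k : ℝ) * p^k * q^(N-k))
      = (k:ℝ) * ((k:ℝ)-1) * ((N.choose k : ℝ) * p^k * q^(N-k))
        + (1 - 2*(N:ℝ)*p) * ((k:ℝ) * ((N.choose k : ℝ) * p^k * q^(N-k)))
        + ((N:ℝ)*p)^2 * ((N.choose k : ℝ) * p^k * q^(N-k)) := by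
    intro k _; ring
  rw [Finset.sum_congr rfl e, Finset.sum_add_distrib, Finset.sum_add_distrib,
    ← Finset.mul_sum, ← Finset.mul_sum, bin_sum N p q h, bin_mean N p q h, bin_fac2 N p q h]
  have hq : q = 1 - p := by linarith
  rw [hq]; ring

private lemma abs_dev (N : ℕ) (p q : ℝ) (h : p + q = 1) (hp : 0 ≤ p) (hq : 0 ≤ q) :
    ∑ k ∈ range (N+1), |(k:ℝ) - N*p| * ((N.choose k : ℝ) * p^k * q^(N-k))
      ≤ Real.sqrt (N * p * q) := by
  set w : ℕ → ℝ := fun k => (N.choose k : ℝ) * p^k * q^(N-k) with hw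
  have hwnn : ∀ k, 0 ≤ w k := fun k => by positivity
  have cs := Finset.sum_mul_sq_le_sq_mul_sq (range (N+1))
    (fun k => Real.sqrt (w k)) (fun k => Real.sqrt (w k) * |(k:ℝ) - N*p|)
  have e1 : ∀ k ∈ range (N+1), Real.sqrt (w k) * (Real.sqrt (w k) * |(k:ℝ) - N*p|)
      = |(k:ℝ) - N*p| * w k := by
    intro k _
    rw [← mul_assoc, Real.mul_self_sqrt (hwnn k)]; ring
  have e2 : ∀ k ∈ range (N+1), Real.sqrt (w k) ^ 2 = w k := fun k _ => Real.sq_sqrt (hwnn k)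
  have e3 : ∀ k ∈ range (N+1), (Real.sqrt (w k) * |(k:ℝ) - N*p|) ^ 2
      = ((k:ℝ) - N*p)^2 * w k := by
    intro k _
    rw [mul_pow, Real.sq_sqrt (hwnn k), sq_abs]; ring
  rw [Finset.sum_congr rfl e1, Finset.sum_congr rfl e2, Finset.sum_congr rfl e3,
    bin_sum N p q h, bin_var N p q h, one_mul] at cs
  have hnn : 0 ≤ ∑ k ∈ range (N+1), |(k:ℝ) - N*p| * w k :=
    Finset.sum_nonneg fun k _ => mul_nonneg (abs_nonneg _) (hwnn k)
  calc ∑ k ∈ range (N+1), |(k:ℝ) - N*p| * w k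
      = Real.sqrt ((∑ k ∈ range (N+1), |(k:ℝ) - N*p| * w k)^2) := (Real.sqrt_sq hnn).symm
    _ ≤ Real.sqrt (N * p * q) := Real.sqrt_le_sqrt cs

private lemma est (m n : ℕ) (hn : 1 ≤ n) (p : ℝ) (hp : 0 ≤ p) (hq : 0 ≤ 1 - p) :
    |(∑ k ∈ range ((m+1)*n + 1), max (1 - (k:ℝ)/n) 0 *
        ((((m+1)*n).choose k : ℝ) * p^k * (1-p)^((m+1)*n - k)))
      - max (1 - ((m:ℝ)+1)*p) 0|
    ≤ Real.sqrt (((m:ℝ)+1) * p * (1-p) / n) := by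
  set N := (m+1)*n with hN
  set q := 1 - p with hq'
  have hpq : p + q = 1 := by rw [hq']; ring
  set w : ℕ → ℝ := fun k => (N.choose k : ℝ) * p^k * q^(N-k) with hw
  have hwnn : ∀ k, 0 ≤ w k := fun k => by positivity
  have h1 : ∑ k ∈ range (N+1), w k = 1 := bin_sum N p q hpq
  have hn' : (0:ℝ) < n := by exact_mod_cast hn
  set L := max (1 - ((m:ℝ)+1)*p) 0 with hL
  have key : ∑ k ∈ range (N+1), (max (1 - (k:ℝ)/n) 0 - L) * w k
      = (∑ k ∈ range (N+1), max (1 - (k:ℝ)/n) 0 * w k) - L := by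
    simp only [sub_mul]
    rw [Finset.sum_sub_distrib, ← Finset.mul_sum, h1, mul_one]
  rw [← key]
  have step1 : |∑ k ∈ range (N+1), (max (1 - (k:ℝ)/n) 0 - L) * w k|
      ≤ ∑ k ∈ range (N+1), |(k:ℝ) - N*p| / n * w k := by
    refine (Finset.abs_sum_le_sum_abs _ _).trans (Finset.sum_le_sum fun k _ => ?_)
    rw [abs_mul, abs_of_nonneg (hwnn k)]
    refine mul_le_mul_of_nonneg_right ?_ (hwnn k)
    have h2 := abs_max_sub_max_le_abs (1 - (k:ℝ)/n) (1 - ((m:ℝ)+1)*p) 0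
    have e : |(1 - (k:ℝ)/n) - (1 - ((m:ℝ)+1)*p)| = |(k:ℝ) - N*p| / n := by
      have hNc : ((N:ℕ):ℝ) = ((m:ℝ)+1) * n := by push_cast [hN]; ring
      have e4 : (1 - (k:ℝ)/n) - (1 - ((m:ℝ)+1)*p) = -(((k:ℝ) - N*p)/n) := by
        rw [hNc]; field_simp; ring
      rw [e4, abs_neg, abs_div, abs_of_pos hn']
    calc |max (1 - (k:ℝ)/n) 0 - L| ≤ |(1 - (k:ℝ)/n) - (1 - ((m:ℝ)+1)*p)| := h2
      _ = |(k:ℝ) - N*p| / n := e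
  have step2 : ∑ k ∈ range (N+1), |(k:ℝ) - N*p| / n * w k
      ≤ Real.sqrt ((N:ℝ) * p * q) / n := by
    have e : ∑ k ∈ range (N+1), |(k:ℝ) - N*p| / n * w k
        = (∑ k ∈ range (N+1), |(k:ℝ) - N*p| * w k) / n := by
      rw [Finset.sum_div]
      exact Finset.sum_congr rfl fun k _ => by ring
    rw [e]
    exact (div_le_div_iff_of_pos_right hn').mpr (abs_dev N p q hpq hp hq)
  have e2 : Real.sqrt (((m:ℝ)+1) * p * (1-p) / n) = Real.sqrt ((N:ℝ) * p * q) / n := by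
    have hNc : ((N:ℕ):ℝ) = ((m:ℝ)+1) * n := by push_cast [hN]; ring
    have e3 : ((m:ℝ)+1) * p * (1-p) / n = (N:ℝ) * p * q / (n^2) := by
      rw [hNc, hq']; field_simp
    rw [e3, Real.sqrt_div (by positivity), Real.sqrt_sq (le_of_lt hn')]
  rw [e2]
  exact step1.trans step2

private lemma reindex (m t : ℕ) (ρ : ℝ) :
    ∑ j ∈ Finset.Icc 1 (t + 1),
        (j : ℝ) / (t + 1) * (Nat.choose ((m + 1) * (t + 1)) (t + 1 - j) : ℝ) *
          ρ ^ (t + 1 - j) * (1 - ρ) ^ (m * (t + 1) + j)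
    = ∑ k ∈ range ((m+1)*(t+1) + 1), max (1 - (k:ℝ)/(t+1)) 0 *
        ((((m+1)*(t+1)).choose k : ℝ) * ρ^k * (1-ρ)^((m+1)*(t+1) - k)) := by
  have h1 : ∑ j ∈ Finset.Icc 1 (t + 1),
        (j : ℝ) / (t + 1) * (Nat.choose ((m + 1) * (t + 1)) (t + 1 - j) : ℝ) *
          ρ ^ (t + 1 - j) * (1 - ρ) ^ (m * (t + 1) + j)
      = ∑ k ∈ range (t+1), max (1 - (k:ℝ)/(t+1)) 0 *
        ((((m+1)*(t+1)).choose k : ℝ) * ρ^k * (1-ρ)^((m+1)*(t+1) - k)) := by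
    refine Finset.sum_nbij' (fun j => t + 1 - j) (fun k => t + 1 - k) ?_ ?_ ?_ ?_ ?_
    · intro j hj; simp only [Finset.mem_Icc] at hj; simp only [Finset.mem_range]; omega
    · intro k hk; simp only [Finset.mem_range] at hk; simp only [Finset.mem_Icc]; omega
    · intro j hj; simp only [Finset.mem_Icc] at hj; show t + 1 - (t + 1 - j) = j; omega
    · intro k hk; simp only [Finset.mem_range] at hk; show t + 1 - (t + 1 - k) = k; omega
    · intro j hj
      simp only [Finset.mem_Icc] at hj
      have e0 : (m+1)*(t+1) = m*(t+1)+(t+1) := by ring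
      have e1 : m * (t + 1) + j = (m+1)*(t+1) - (t+1-j) := by omega
      have e2 : ((j:ℝ)) / (t+1) = max (1 - ((t+1-j : ℕ):ℝ)/(t+1)) 0 := by
        have hc : ((t+1-j : ℕ):ℝ) = (t+1:ℝ) - j := by
          have : (j:ℝ) ≤ (t+1:ℝ) := by exact_mod_cast hj.2
          push_cast [Nat.cast_sub hj.2]; ring
        rw [hc, max_eq_left]
        · have ht : (0:ℝ) < t+1 := by positivity
          field_simp; ring
        · have hj1 : (1:ℝ) ≤ j := by exact_mod_cast hj.1
          have ht : (0:ℝ) < t+1 := by positivity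
          rw [sub_nonneg, div_le_one ht]; linarith
      rw [e1, e2]
      ring
  rw [h1]
  refine Finset.sum_subset ?_ ?_
  · intro k hk
    simp only [Finset.mem_range] at *
    have h2 : t+1 ≤ (m+1)*(t+1) := Nat.le_mul_of_pos_left _ (by omega)
    omega
  · intro k hk hk'
    simp only [Finset.mem_range, not_lt] at hk'
    have : max (1 - (k:ℝ)/(t+1)) 0 = 0 := by
      apply max_eq_right
      have hk2 : ((t:ℝ)+1) ≤ k := by exact_mod_cast hk'
      have ht : (0:ℝ) < t+1 := by positivity
      rw [sub_nonpos, le_div_iff₀ ht]; linarith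
    rw [this, zero_mul]

/-- Steady-state fundamental diagram: the flow
`φ_m(t) = 1 − ρ − Σ_{j=1}^{t+1} (j/(t+1)) C((m+1)(t+1), t+1−j) ρ^{t+1−j} (1−ρ)^{m(t+1)+j}`
tends, as `t → ∞`, to `min(mρ, 1 − ρ)`. -/
theorem tendsto_flow (m : ℕ) (hm : 1 ≤ m) (ρ : ℝ) (hρ : ρ ∈ Set.Ioo (0 : ℝ) 1) :
    Tendsto (fun t : ℕ =>
        1 - ρ - ∑ j ∈ Finset.Icc 1 (t + 1),
          (j : ℝ) / (t + 1) * (Nat.choose ((m + 1) * (t + 1)) (t + 1 - j) : ℝ) *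
            ρ ^ (t + 1 - j) * (1 - ρ) ^ (m * (t + 1) + j))
      atTop (nhds (min ((m : ℝ) * ρ) (1 - ρ))) := by
  obtain ⟨hρ0, hρ1⟩ := hρ
  set L := max (1 - ((m:ℝ)+1)*ρ) 0 with hL
  set T : ℕ → ℝ := fun t => ∑ k ∈ range ((m+1)*(t+1) + 1), max (1 - (k:ℝ)/(t+1)) 0 *
        ((((m+1)*(t+1)).choose k : ℝ) * ρ^k * (1-ρ)^((m+1)*(t+1) - k)) with hT
  have hbound : ∀ t : ℕ, ‖T t - L‖ ≤ Real.sqrt (((m:ℝ)+1) * ρ * (1-ρ) / ((t:ℝ)+1)) := by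
    intro t
    have h := est m (t+1) (by omega) ρ (le_of_lt hρ0) (by linarith)
    rw [Real.norm_eq_abs]
    convert h using 3 <;> push_cast <;> ring
  have hg : Tendsto (fun t : ℕ => Real.sqrt (((m:ℝ)+1) * ρ * (1-ρ) / ((t:ℝ)+1)))
      atTop (nhds 0) := by
    have h1 : Tendsto (fun t : ℕ => ((t:ℝ)+1)) atTop atTop :=
      tendsto_atTop_add_const_right _ 1 tendsto_natCast_atTop_atTop
    have h2 : Tendsto (fun t : ℕ => ((m:ℝ)+1) * ρ * (1-ρ) / ((t:ℝ)+1)) atTop (nhds 0) :=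
      Tendsto.div_atTop tendsto_const_nhds h1
    have h3 := (Real.continuous_sqrt.tendsto' 0 0 Real.sqrt_zero).comp h2
    exact h3
  have hT0 : Tendsto (fun t => T t - L) atTop (nhds 0) :=
    squeeze_zero_norm hbound hg
  have hTL : Tendsto T atTop (nhds L) := by
    have := hT0.add_const L
    simpa using this
  have heq : ∀ t : ℕ, 1 - ρ - ∑ j ∈ Finset.Icc 1 (t + 1),
          (j : ℝ) / (t + 1) * (Nat.choose ((m + 1) * (t + 1)) (t + 1 - j) : ℝ) *
            ρ ^ (t + 1 - j) * (1 - ρ) ^ (m * (t + 1) + j) = 1 - ρ - T t := by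
    intro t; rw [reindex m t ρ]
  have hmin : min ((m : ℝ) * ρ) (1 - ρ) = 1 - ρ - L := by
    rw [hL]
    rcases le_total (1 - ((m:ℝ)+1)*ρ) 0 with h | h
    · rw [max_eq_right h, min_eq_right (by nlinarith), sub_zero]
    · rw [max_eq_left h, min_eq_left (by nlinarith)]; ring
  rw [hmin]
  exact Tendsto.congr (fun t => (heq t).symm) (tendsto_const_nhds.sub hTL)
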